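/- cf(cov(ℳ)) ≥ add(R), where ℳ is the meager ideal on 2^ω, cov(ℳ) is the least cardinality of a family of meager sets covering 2^ω, R is the collection of R sets, and add(R) is the least cardinality of a family of R sets whose union is not an R set. -/

import Mathlib

open Cardinal

/-- `X` is an R set. -/
def RSet (X : Set (ℕ → Bool)) : Prop :=
  ∀ H : Set ((ℕ → Bool) × (ℕ → Bool)), MeasurableSet H →
    (∀ x : ℕ → Bool, IsMeagre {y | (x, y) ∈ H}) →
    (⋃ x ∈ X, {y | (x, y) ∈ H}) ≠ Set.univ

/-- The covering number of the meager ideal on `2^ω`. -/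
noncomputable def covMeager : Cardinal :=
  sInf {c : Cardinal | ∃ 𝒜 : Set (Set (ℕ → Bool)),
    (∀ A ∈ 𝒜, IsMeagre A) ∧ ⋃₀ 𝒜 = Set.univ ∧ #𝒜 = c}

/-- The additivity of the ideal of R sets. -/
noncomputable def addR : Cardinal :=
  sInf {c : Cardinal | ∃ 𝒜 : Set (Set (ℕ → Bool)),
    (∀ A ∈ 𝒜, RSet A) ∧ ¬ RSet (⋃₀ 𝒜) ∧ #𝒜 = c}

open Set Classical

noncomputable section
namespace RProofAux

abbrev C := ℕ → Bool

lemma exists_cylinder {O : Set C} (hO : IsOpen O) {z : C} (hz : z ∈ O) :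
    ∃ m : ℕ, ∀ y : C, (∀ k < m, y k = z k) → y ∈ O := by
  have h := hO.mem_nhds hz
  rw [nhds_pi, Filter.mem_pi] at h
  obtain ⟨I, hIf, V, hV, hsub⟩ := h
  obtain ⟨m, hm⟩ := hIf.bddAbove
  refine ⟨m + 1, fun y hy => hsub fun i hi => ?_⟩
  have hy' : y i = z i := hy i (Nat.lt_succ_of_le (hm hi))
  rw [hy']
  exact mem_of_mem_nhds (hV i)

lemma isClopen_coord (k : ℕ) (b : Bool) : IsClopen {y : C | y k = b} :=
  (isClopen_discrete {b}).preimage (continuous_apply k)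

lemma not_isMeagre_univ : ¬ IsMeagre (Set.univ : Set C) := by
  intro h
  rw [IsMeagre, compl_univ] at h
  exact ((dense_of_mem_residual h).nonempty).ne_empty rfl

lemma isMeagre_of_closed_nwd {F : Set C} (hc : IsClosed F) (hn : IsNowhereDense F) :
    IsMeagre F := by
  rw [IsMeagre]
  have := isClosed_isNowhereDense_iff_compl.1 ⟨hc, hn⟩
  exact residual_of_dense_open this.1 this.2

lemma isMeagre_singleton (y : C) : IsMeagre ({y} : Set C) := by
  refine isMeagre_of_closed_nwd isClosed_singleton ?_
  rw [IsClosed.isNowhereDense_iff isClosed_singleton]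
  by_contra h
  obtain ⟨z, hz⟩ := nonempty_iff_ne_empty.2 h
  obtain ⟨m, hm⟩ := exists_cylinder isOpen_interior hz
  have hzy : z ∈ ({y} : Set C) := interior_subset hz
  rw [mem_singleton_iff] at hzy
  subst hzy
  set y' : C := fun k => if k = m then !(z m) else z k with hy'
  have h1 : y' ∈ interior ({z} : Set C) := by
    apply hm
    intro k hk
    simp only [hy']
    rw [if_neg (by omega)]
  have := interior_subset h1
  rw [mem_singleton_iff] at this
  have : y' m = z m := by rw [this]
  simp [hy'] at this

/-- code predicates -/
def P (x : C) (m : ℕ) : Prop := x (2*m+1) = true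
def Inf (x : C) : Prop := ∀ n, ∃ m, n ≤ m ∧ P x m
def Consec (x : C) (a b : ℕ) : Prop :=
  P x a ∧ P x b ∧ a < b ∧ ∀ c, a < c → c < b → ¬ P x c
def sig (x : C) (k : ℕ) : Bool := x (2*k)

def CN (x : C) (N : ℕ) : Set C :=
  {y | ∀ a b, N ≤ a → Consec x a b → ∃ k, a ≤ k ∧ k < b ∧ y k ≠ sig x k}

def U : Set (C × C) := {p | Inf p.1 ∧ ∃ N, p.2 ∈ CN p.1 N}

lemma isClosed_CN (x : C) (N : ℕ) : IsClosed (CN x N) := by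
  have : CN x N = ⋂ (a : ℕ) (b : ℕ),
      {y : C | N ≤ a → Consec x a b → ∃ k, a ≤ k ∧ k < b ∧ y k ≠ sig x k} := by
    ext y; simp [CN, mem_iInter]
  rw [this]
  refine isClosed_iInter fun a => isClosed_iInter fun b => ?_
  by_cases h : N ≤ a ∧ Consec x a b
  · have : {y : C | N ≤ a → Consec x a b → ∃ k, a ≤ k ∧ k < b ∧ y k ≠ sig x k}
        = ⋃ k ∈ Finset.Ico a b, {y : C | y k = !(sig x k)} := by
      ext y
      simp only [mem_setOf_eq, mem_iUnion, Finset.mem_Ico, exists_prop]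
      constructor
      · rintro hy
        obtain ⟨k, h1, h2, h3⟩ := hy h.1 h.2
        exact ⟨k, ⟨h1, h2⟩, by cases hyk : y k <;> cases hsk : sig x k <;> simp_all⟩
      · rintro ⟨k, ⟨h1, h2⟩, h3⟩ _ _
        exact ⟨k, h1, h2, by rw [h3]; cases sig x k <;> simp⟩
    rw [this]
    exact (Finset.Ico a b).finite_toSet.isClosed_biUnion
      (fun k _ => (isClopen_coord k _).isClosed)
  · have : {y : C | N ≤ a → Consec x a b → ∃ k, a ≤ k ∧ k < b ∧ y k ≠ sig x k}
        = (Set.univ : Set C) := by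
      ext y
      simp only [mem_setOf_eq, Set.mem_univ, iff_true]
      intro h1 h2
      exact absurd ⟨h1, h2⟩ h
    rw [this]; exact isClosed_univ

/-- Next element of the coded set above `a`. -/
lemma exists_consec (x : C) (hx : Inf x) {a : ℕ} (ha : P x a) :
    ∃ b, Consec x a b := by
  have hne : ∃ m, a < m ∧ P x m := by
    obtain ⟨m, hm1, hm2⟩ := hx (a+1); exact ⟨m, by omega, hm2⟩
  classical
  refine ⟨Nat.find hne, ha, (Nat.find_spec hne).2, (Nat.find_spec hne).1,
    fun c hc1 hc2 hPc => Nat.find_min hne hc2 ⟨hc1, hPc⟩⟩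

lemma nwd_CN {x : C} (hx : Inf x) (N : ℕ) : IsNowhereDense (CN x N) := by
  rw [IsClosed.isNowhereDense_iff (isClosed_CN x N), interior_eq_empty_iff_dense_compl]
  rw [dense_iff_inter_open]
  rintro O hO ⟨z, hz⟩
  obtain ⟨m, hm⟩ := exists_cylinder hO hz
  -- find a consecutive pair (a, b) with a ≥ max N m
  obtain ⟨a, ha1, ha2⟩ := hx (max N m)
  obtain ⟨b, hcons⟩ := exists_consec x hx ha2
  set y : C := fun k => if a ≤ k ∧ k < b then sig x k else z k with hy
  refine ⟨y, hm y (fun k hk => by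
      simp only [hy]
      rw [if_neg (by omega)]), fun hyC => ?_⟩
  obtain ⟨k, hk1, hk2, hk3⟩ := hyC a b (le_trans (le_max_left _ _) ha1) hcons
  apply hk3
  simp only [hy]
  rw [if_pos ⟨hk1, hk2⟩]

lemma isMeagre_section (x : C) : IsMeagre {y | (x, y) ∈ U} := by
  by_cases hx : Inf x
  · have : {y | (x, y) ∈ U} = ⋃ N, CN x N := by
      ext y
      simp only [U, mem_setOf_eq, mem_iUnion, hx, true_and]
    rw [this]
    exact isMeagre_iUnion fun N =>
      isMeagre_of_closed_nwd (isClosed_CN x N) (nwd_CN hx N)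
  · have : {y | (x, y) ∈ U} = (∅ : Set C) := by
      ext y
      simp only [U, mem_setOf_eq, hx, false_and, mem_empty_iff_false]
    rw [this]
    exact IsMeagre.empty


lemma escape_aux (F : Set C) (hc : IsClosed F) (hn : IsNowhereDense F) (a : ℕ)
    (L : List C) : ∃ b : ℕ, ∃ τ : C, a ≤ b ∧
      ∀ s ∈ L, ∀ y : C, (∀ k < a, y k = s k) →
        (∀ k, a ≤ k → k < b → y k = τ k) → y ∉ F := by
  have hcompl := isClosed_isNowhereDense_iff_compl.1 ⟨hc, hn⟩
  induction L with
  | nil => exact ⟨a, fun _ => false, le_rfl, by simp⟩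
  | cons s L ih =>
    obtain ⟨b, τ, hab, hL⟩ := ih
    set w : C := fun k => if k < a then s k else if k < b then τ k else false with hw
    set D : Set C := {y | ∀ k < b, y k = w k} with hD
    have hDopen : IsOpen D := by
      have hDeq : D = ⋂ k ∈ Finset.range b, {y : C | y k = w k} := by
        ext y; simp [hD]
      rw [hDeq]
      exact isOpen_biInter_finset fun k _ => (isClopen_coord k _).isOpen
    have hDne : D.Nonempty := ⟨w, fun k _ => rfl⟩
    obtain ⟨z, hzD, hzF⟩ : ∃ z, z ∈ D ∧ z ∈ Fᶜ := by
      obtain ⟨z, hz1, hz2⟩ := hcompl.2.exists_mem_open hDopen hDne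
      exact ⟨z, hz2, hz1⟩
    obtain ⟨m, hm⟩ := exists_cylinder hcompl.1 hzF
    refine ⟨max b m, fun k => if k < b then τ k else z k,
      le_trans hab (le_max_left _ _), ?_⟩
    rintro s' hs' y hpre hmatch
    rcases List.mem_cons.1 hs' with h | h
    · subst h
      intro hyF
      refine hm y ?_ hyF
      intro k hk
      by_cases h1 : k < a
      · rw [hpre k h1, hzD k (lt_of_lt_of_le h1 hab), hw]
        simp only [if_pos h1]
      · by_cases h2 : k < b
        · rw [hmatch k (le_of_not_gt h1) (lt_of_lt_of_le h2 (le_max_left b m)),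
            hzD k h2, hw]
          simp only [if_neg h1, if_pos h2]
        · rw [hmatch k (le_of_not_gt h1) (lt_of_lt_of_le hk (le_max_right b m))]
          simp only [if_neg h2]
    · refine hL s' h y hpre (fun k hk1 hk2 => ?_)
      have := hmatch k hk1 (lt_of_lt_of_le hk2 (le_max_left b m))
      rw [this]
      simp only [if_pos hk2]

lemma escape (F : Set C) (hc : IsClosed F) (hn : IsNowhereDense F) (a : ℕ) :
    ∃ b : ℕ, ∃ τ : C, a < b ∧ ∀ y : C, (∀ k, a ≤ k → k < b → y k = τ k) → y ∉ F := by
  obtain ⟨b, τ, hab, h⟩ := escape_aux F hc hn a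
    ((Finset.univ : Finset (Fin a → Bool)).toList.map
      (fun g k => if h : k < a then g ⟨k, h⟩ else false))
  refine ⟨b + 1, τ, by omega, fun y hy => ?_⟩
  have hsmem : (fun k => if h : k < a then y k else false) ∈
      (Finset.univ : Finset (Fin a → Bool)).toList.map
      (fun g k => if h : k < a then g ⟨k, h⟩ else false) := by
    refine List.mem_map.2 ⟨fun i : Fin a => y i, Finset.mem_toList.2 (Finset.mem_univ _), ?_⟩
    rfl
  refine h _ hsmem y (fun k hk => by simp [hk]) (fun k hk1 hk2 => hy k hk1 (by omega))

variable (F : ℕ → Set C) (hF : ∀ n, IsClosed (F n) ∧ IsNowhereDense (F n))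

def chain : ℕ → ℕ × C
  | 0 => (0, fun _ => false)
  | n+1 =>
    let p := chain n
    let h := escape (F n) (hF n).1 (hF n).2 p.1
    (h.choose, fun k => if k < p.1 then p.2 k else h.choose_spec.choose k)

lemma chain_lt (n : ℕ) : (chain F hF n).1 < (chain F hF (n+1)).1 := by
  show (chain F hF n).1 < (escape (F n) (hF n).1 (hF n).2 (chain F hF n).1).choose
  exact (escape (F n) (hF n).1 (hF n).2 (chain F hF n).1).choose_spec.choose_spec.1

lemma chain_stab (n : ℕ) (k : ℕ) (hk : k < (chain F hF n).1) :
    (chain F hF (n+1)).2 k = (chain F hF n).2 k := by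
  show (if k < (chain F hF n).1 then _ else _) = _
  rw [if_pos hk]

lemma chain_escape (n : ℕ) (y : C)
    (hy : ∀ k, (chain F hF n).1 ≤ k → k < (chain F hF (n+1)).1 →
      y k = (chain F hF (n+1)).2 k) : y ∉ F n := by
  set h := escape (F n) (hF n).1 (hF n).2 (chain F hF n).1
  refine h.choose_spec.choose_spec.2 y (fun k hk1 hk2 => ?_)
  have := hy k hk1 hk2
  rw [this]
  show (if k < (chain F hF n).1 then _ else _) = _
  rw [if_neg (by omega)]

def cf (n : ℕ) : ℕ := (chain F hF n).1
def sigma' (k : ℕ) : Bool := (chain F hF (k+1)).2 k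

lemma cf_strictMono : StrictMono (cf F hF) :=
  strictMono_nat_of_lt_succ (chain_lt F hF)

lemma chain_stab' {n m : ℕ} (hnm : n ≤ m) (k : ℕ) (hk : k < cf F hF n) :
    (chain F hF m).2 k = (chain F hF n).2 k := by
  induction m with
  | zero => obtain rfl : n = 0 := Nat.le_zero.1 hnm; rfl
  | succ m ih =>
    rcases Nat.lt_or_ge n (m+1) with h | h
    · have hnm' : n ≤ m := by omega
      rw [chain_stab F hF m k (lt_of_lt_of_le hk ((cf_strictMono F hF).le_iff_le.2 hnm')),
        ih hnm']
    · have : n = m + 1 := by omega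
      subst this; rfl

lemma sigma'_eq (n k : ℕ) (hk : k < cf F hF n) :
    (chain F hF n).2 k = sigma' F hF k := by
  have hk1 : k < cf F hF (k+1) :=
    lt_of_lt_of_le (Nat.lt_succ_self k) ((cf_strictMono F hF).le_apply)
  rcases Nat.le_total n (k+1) with h | h
  · rw [sigma', ← chain_stab' F hF h k hk]
  · rw [sigma', ← chain_stab' F hF h k hk1]

lemma match_escape (n : ℕ) (y : C)
    (hy : ∀ k, cf F hF n ≤ k → k < cf F hF (n+1) → y k = sigma' F hF k) :
    y ∉ F n := by
  refine chain_escape F hF n y (fun k hk1 hk2 => ?_)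
  rw [hy k hk1 hk2, sigma'_eq F hF (n+1) k hk2]


lemma chainpkg (F : ℕ → Set C) (hF : ∀ n, IsClosed (F n) ∧ IsNowhereDense (F n)) :
    ∃ f : ℕ → ℕ, ∃ σ : C, StrictMono f ∧
      ∀ n, ∀ y : C, (∀ k, f n ≤ k → k < f (n+1) → y k = σ k) → y ∉ F n :=
  ⟨cf F hF, sigma' F hF, cf_strictMono F hF, fun n y hy => match_escape F hF n y hy⟩

/-- Union of two closed nowhere dense sets is closed and nowhere dense. -/
lemma closed_nwd_union {s t : Set C} (hs : IsClosed s ∧ IsNowhereDense s)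
    (ht : IsClosed t ∧ IsNowhereDense t) :
    IsClosed (s ∪ t) ∧ IsNowhereDense (s ∪ t) := by
  have hs' := isClosed_isNowhereDense_iff_compl.1 hs
  have ht' := isClosed_isNowhereDense_iff_compl.1 ht
  rw [isClosed_isNowhereDense_iff_compl, compl_union]
  exact ⟨hs'.1.inter ht'.1, hs'.2.inter_of_isOpen_left ht'.2 hs'.1⟩

/-- Every meagre set is contained in a section of `U`. -/
lemma exists_code (M : Set C) (hM : IsMeagre M) :
    ∃ x : C, Inf x ∧ M ⊆ {y | (x, y) ∈ U} := by
  obtain ⟨S, hSnwd, hScnt, hScov⟩ := isMeagre_iff_countable_union_isNowhereDense.1 hM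
  rcases S.eq_empty_or_nonempty with rfl | hSne
  · refine ⟨fun _ => true, fun n => ⟨n, le_rfl, rfl⟩, ?_⟩
    intro y hy
    simp only [sUnion_empty] at hScov
    exact absurd (hScov hy) (notMem_empty y)
  obtain ⟨g, hg⟩ := Set.Countable.exists_eq_range hScnt hSne
  set F : ℕ → Set C := fun n => ⋃ i ∈ Finset.range (n+1), closure (g i) with hFdef
  have hFprop : ∀ n, IsClosed (F n) ∧ IsNowhereDense (F n) := by
    intro n
    induction n with
    | zero =>
      have : F 0 = closure (g 0) := by simp [hFdef]
      rw [this]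
      have hnwd : IsNowhereDense (g 0) := hSnwd _ (by rw [hg]; exact ⟨0, rfl⟩)
      exact ⟨isClosed_closure, hnwd.closure⟩
    | succ n ih =>
      have : F (n+1) = F n ∪ closure (g (n+1)) := by
        simp only [hFdef]
        rw [Finset.range_add_one, Finset.set_biUnion_insert, union_comm]
      rw [this]
      have hnwd : IsNowhereDense (g (n+1)) := hSnwd _ (by rw [hg]; exact ⟨n+1, rfl⟩)
      exact closed_nwd_union ih ⟨isClosed_closure, hnwd.closure⟩
  have hFmono : ∀ {i n : ℕ}, i ≤ n → F i ⊆ F n := by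
    intro i n hin y hy
    simp only [hFdef, mem_iUnion, exists_prop, Finset.mem_range] at hy ⊢
    obtain ⟨j, hj, hyj⟩ := hy
    exact ⟨j, by omega, hyj⟩
  obtain ⟨f, σ, hfmono, hesc⟩ := chainpkg F hFprop
  -- the code
  set x : C := fun j => if j % 2 = 0 then σ (j/2)
    else if ∃ i, f i = (j-1)/2 then true else false with hx
  have hPx : ∀ m, P x m ↔ ∃ i, f i = m := by
    intro m
    simp only [P, hx]
    rw [if_neg (by omega)]
    have h2 : (2*m+1-1)/2 = m := by omega
    rw [h2]
    split_ifs with h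
    · simpa using h
    · simpa using h
  have hsig : ∀ k, sig x k = σ k := by
    intro k
    simp only [sig, hx]
    rw [if_pos (by omega)]
    congr 1
    omega
  have hInf : Inf x := by
    intro n
    exact ⟨f n, hfmono.le_apply, (hPx (f n)).2 ⟨n, rfl⟩⟩
  refine ⟨x, hInf, ?_⟩
  intro y hy
  -- y ∈ some F i
  have : ∃ i, y ∈ F i := by
    obtain ⟨s, hsS, hys⟩ := hScov hy
    rw [hg] at hsS
    obtain ⟨i, rfl⟩ := hsS
    exact ⟨i, mem_biUnion (Finset.self_mem_range_succ i) (subset_closure hys)⟩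
  obtain ⟨i, hyF⟩ := this
  refine ⟨hInf, f i, ?_⟩
  intro a b ha hcons
  by_contra hno
  push_neg at hno
  -- from Consec, get a = f n, b = f (n+1), n ≥ i
  obtain ⟨n, rfl⟩ := (hPx a).1 hcons.1
  obtain ⟨m, rfl⟩ := (hPx _).1 hcons.2.1
  have hnm : n < m := hfmono.lt_iff_lt.1 hcons.2.2.1
  have hni : i ≤ n := hfmono.le_iff_le.1 ha
  have hb : f m = f (n+1) := by
    rcases Nat.lt_or_ge (n+1) m with h | h
    · exact absurd ((hPx (f (n+1))).2 ⟨n+1, rfl⟩)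
        (hcons.2.2.2 (f (n+1)) (hfmono (Nat.lt_succ_self n)) (hfmono h))
    · have : m = n + 1 := by omega
      rw [this]
  -- y matches σ on [f n, f (n+1)), so y ∉ F n, but y ∈ F i ⊆ F n
  refine hesc n y (fun k hk1 hk2 => ?_) (hFmono hni hyF)
  have := hno k hk1 (by rw [hb]; exact hk2)
  rwa [hsig] at this

lemma mcoord1 (j : ℕ) (b : Bool) : MeasurableSet {p : C × C | p.1 j = b} := by
  have h : Measurable (fun p : C × C => p.1 j) :=
    (measurable_pi_apply j).comp measurable_fst
  exact h (measurableSet_singleton b)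

lemma mcoord2 (k j : ℕ) : MeasurableSet {p : C × C | p.2 k ≠ p.1 j} := by
  have heq : {p : C × C | p.2 k ≠ p.1 j}
      = ⋃ b : Bool, ({p : C × C | p.2 k = b} ∩ {p : C × C | p.1 j = !b}) := by
    ext p
    simp only [mem_setOf_eq, mem_iUnion, mem_inter_iff]
    constructor
    · intro h
      refine ⟨p.2 k, rfl, ?_⟩
      cases h2 : p.2 k <;> cases h1 : p.1 j <;> simp_all
    · rintro ⟨b, hb1, hb2⟩
      rw [hb1, hb2]
      cases b <;> simp
  rw [heq]
  refine MeasurableSet.iUnion fun b => MeasurableSet.inter ?_ (mcoord1 j (!b))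
  have h : Measurable (fun p : C × C => p.2 k) :=
    (measurable_pi_apply k).comp measurable_snd
  exact h (measurableSet_singleton b)

lemma mconst (q : Prop) : MeasurableSet {p : C × C | q} := MeasurableSet.const q

lemma mP (m : ℕ) : MeasurableSet {p : C × C | P p.1 m} := mcoord1 (2*m+1) true

lemma mInf : MeasurableSet {p : C × C | Inf p.1} := by
  have heq : {p : C × C | Inf p.1}
      = ⋂ n : ℕ, ⋃ m : ℕ, ({p : C × C | n ≤ m} ∩ {p : C × C | P p.1 m}) := by
    ext p
    simp only [Inf, mem_setOf_eq, mem_iInter, mem_iUnion, mem_inter_iff]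
  rw [heq]
  exact MeasurableSet.iInter fun n => MeasurableSet.iUnion fun m =>
    (mconst _).inter (mP m)

lemma mConsec (a b : ℕ) : MeasurableSet {p : C × C | Consec p.1 a b} := by
  have heq : {p : C × C | Consec p.1 a b}
      = {p : C × C | P p.1 a} ∩ {p : C × C | P p.1 b} ∩ {p : C × C | a < b} ∩
        ⋂ c : ℕ, ({p : C × C | a < c ∧ c < b} ∩ {p : C × C | P p.1 c})ᶜ := by
    ext p
    simp only [Consec, mem_setOf_eq, mem_inter_iff, mem_iInter, mem_compl_iff,
      not_and]
    constructor
    · rintro ⟨h1, h2, h3, h4⟩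
      exact ⟨⟨⟨h1, h2⟩, h3⟩, fun c hc => h4 c hc.1 hc.2⟩
    · rintro ⟨⟨⟨h1, h2⟩, h3⟩, h4⟩
      exact ⟨h1, h2, h3, fun c hc1 hc2 => h4 c ⟨hc1, hc2⟩⟩
  rw [heq]
  exact (((mP a).inter (mP b)).inter (mconst _)).inter
    (MeasurableSet.iInter fun c => ((mconst _).inter (mP c)).compl)

lemma measurable_U : MeasurableSet U := by
  have heq : U = {p : C × C | Inf p.1} ∩
      ⋃ N : ℕ, ⋂ a : ℕ, ⋂ b : ℕ,
        ({p : C × C | N ≤ a}ᶜ ∪ {p : C × C | Consec p.1 a b}ᶜ ∪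
          ⋃ k : ℕ, ({p : C × C | a ≤ k ∧ k < b} ∩ {p : C × C | p.2 k ≠ p.1 (2*k)})) := by
    ext p
    simp only [U, CN, sig, mem_setOf_eq, mem_inter_iff, mem_iUnion, mem_iInter,
      mem_union, mem_compl_iff]
    refine and_congr_right fun _ => exists_congr fun N => forall_congr' fun a =>
      forall_congr' fun b => ?_
    constructor
    · intro h
      by_cases h1 : N ≤ a
      · by_cases h2 : Consec p.1 a b
        · obtain ⟨k, hk1, hk2, hk3⟩ := h h1 h2
          exact Or.inr ⟨k, ⟨hk1, hk2⟩, hk3⟩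
        · exact Or.inl (Or.inr h2)
      · exact Or.inl (Or.inl h1)
    · rintro ((h1 | h2) | ⟨k, ⟨hk1, hk2⟩, hk3⟩) ha hcons
      · exact absurd ha h1
      · exact absurd hcons h2
      · exact ⟨k, hk1, hk2, hk3⟩
  rw [heq]
  refine mInf.inter (MeasurableSet.iUnion fun N => MeasurableSet.iInter fun a =>
    MeasurableSet.iInter fun b => ?_)
  exact ((mconst _).compl.union ((mConsec a b).compl)).union
    (MeasurableSet.iUnion fun k => (mconst _).inter (mcoord2 k (2*k)))

lemma covSet_nonempty : {c : Cardinal | ∃ 𝒜 : Set (Set (ℕ → Bool)),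
    (∀ A ∈ 𝒜, IsMeagre A) ∧ ⋃₀ 𝒜 = Set.univ ∧ #𝒜 = c}.Nonempty := by
  refine ⟨_, Set.range (fun y : C => ({y} : Set C)), ?_, ?_, rfl⟩
  · rintro A ⟨y, rfl⟩
    exact isMeagre_singleton y
  · ext y
    simp only [mem_sUnion, Set.mem_univ, iff_true, Set.mem_range]
    exact ⟨{y}, ⟨y, rfl⟩, rfl⟩

lemma isMeagre_union {s t : Set C} (hs : IsMeagre s) (ht : IsMeagre t) :
    IsMeagre (s ∪ t) := by
  rw [IsMeagre, compl_union]
  exact Filter.inter_mem hs ht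

lemma aleph0_le_covMeager : ℵ₀ ≤ covMeager := by
  refine le_csInf covSet_nonempty ?_
  rintro c ⟨𝒜, hmeager, hcover, rfl⟩
  by_contra h
  push_neg at h
  have hfin : 𝒜.Finite := Cardinal.lt_aleph0_iff_set_finite.1 h
  have key : ∀ T : Set (Set C), T.Finite → (∀ A ∈ T, IsMeagre A) → IsMeagre (⋃₀ T) := by
    intro T hT
    refine Set.Finite.induction_on
      (motive := fun T _ => (∀ A ∈ T, IsMeagre A) → IsMeagre (⋃₀ T)) T hT
      (fun _ => by rw [sUnion_empty]; exact IsMeagre.empty) ?_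
    intro a s _ _ ih hmg
    rw [sUnion_insert]
    exact isMeagre_union (hmg _ (Set.mem_insert _ _))
      (ih fun A hA => hmg A (Set.mem_insert_of_mem _ hA))
  have := key 𝒜 hfin hmeager
  rw [hcover] at this
  exact not_isMeagre_univ this

lemma rset_of_small {X : Set C} (h : #X < covMeager) : RSet X := by
  intro H _ hsec huniv
  have hmem : covMeager ≤ #((fun x => {y | (x, y) ∈ H}) '' X) := by
    refine csInf_le' ⟨(fun x => {y | (x, y) ∈ H}) '' X, ?_, ?_, rfl⟩
    · rintro A ⟨x, _, rfl⟩
      exact hsec x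
    · rw [sUnion_image]
      exact huniv
  exact absurd (lt_of_le_of_lt (hmem.trans mk_image_le) h) (lt_irrefl _)

theorem addR_le_cof_covMeager' : addR ≤ covMeager.ord.cof := by
  -- get a minimal covering family
  have hmem : covMeager ∈ {c : Cardinal | ∃ 𝒜 : Set (Set (ℕ → Bool)),
      (∀ A ∈ 𝒜, IsMeagre A) ∧ ⋃₀ 𝒜 = Set.univ ∧ #𝒜 = c} :=
    csInf_mem covSet_nonempty
  obtain ⟨𝒜, hmeager, hcover, hcard⟩ := hmem
  -- choose codes
  have hcode : ∀ A : 𝒜, ∃ x : C, (A : Set C) ⊆ {y | (x, y) ∈ U} := fun A => by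
    obtain ⟨x, _, h⟩ := exists_code A (hmeager A A.2)
    exact ⟨x, h⟩
  choose co hco using hcode
  -- enumerate 𝒜 by covMeager.ord.toType
  have htype : #(covMeager.ord.ToType) = #(𝒜 : Set (Set C)) := by
    rw [Cardinal.mk_toType, Cardinal.card_ord, hcard]
  obtain ⟨e⟩ := Cardinal.eq.1 htype
  -- cofinal set
  haveI : IsWellOrder covMeager.ord.ToType (· < ·) := isWellOrder_lt
  obtain ⟨S, hSunb, hScard⟩ :=
    Order.exists_cof_eq covMeager.ord.ToType
  rw [Ordinal.cof_toType] at hScard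
  set B : covMeager.ord.ToType → Set C := fun t => (fun s => co (e s)) '' Set.Iic t with hB
  have h1 : addR ≤ #(B '' S) := by
    refine csInf_le' ⟨B '' S, ?_, ?_, rfl⟩
    · -- each B t is an R set
      rintro _ ⟨t, _, rfl⟩
      refine rset_of_small (lt_of_le_of_lt mk_image_le ?_)
      have hIio : #(Set.Iio t) < covMeager := Cardinal.mk_Iio_ord_toType t
      have : #(Set.Iic t) = #(insert t (Set.Iio t) : Set _) := by
        rw [Set.Iio_insert]
      rw [this]
      exact lt_of_le_of_lt Cardinal.mk_insert_le
        (Cardinal.add_lt_of_lt aleph0_le_covMeager hIio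
          (lt_of_lt_of_le Cardinal.one_lt_aleph0 aleph0_le_covMeager))
    · -- the union is not an R set
      intro hR
      refine hR U measurable_U isMeagre_section ?_
      rw [Set.eq_univ_iff_forall]
      intro y
      have : y ∈ ⋃₀ 𝒜 := by rw [hcover]; trivial
      obtain ⟨A, hA, hyA⟩ := this
      set t0 := e.symm ⟨A, hA⟩ with ht0
      obtain ⟨s, hsS, hs⟩ := hSunb t0
      have hxmem : co ⟨A, hA⟩ ∈ ⋃₀ (B '' S) := by
        refine ⟨B s, ⟨s, hsS, rfl⟩, ⟨t0, hs, ?_⟩⟩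
        show co (e (e.symm ⟨A, hA⟩)) = co ⟨A, hA⟩
        rw [e.apply_symm_apply]
      exact Set.mem_biUnion hxmem (hco ⟨A, hA⟩ hyA)
  refine h1.trans (le_trans mk_image_le ?_)
  rw [hScard]

end RProofAux
end

theorem addR_le_cof_covMeager : addR ≤ covMeager.ord.cof :=
  RProofAux.addR_le_cof_covMeager'
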